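/- Let r > 0 and let ψ : (0, ∞) → ℝ be an arbitrary real-valued function; set φ(s,r) = s + ψ(r). Then the function f(s) = 1/( 2φ(s,r) + 2·K_{n=1}^∞ (n²r²/φ(s,r)) ), defined for s > −ψ(r), is the unique function on (−ψ(r), ∞) tending to 0 at +∞ that satisfies the functional equation f(s) + f(s+2r) = 1/(φ(s,r) + r) for all s > −ψ(r). -/

import Mathlib

open Filter Real

/-- Numerators of the convergents of a generalized continued fraction with
integer part `b₀`, partial numerators `a n` and partial denominators `b n` (for `n ≥ 1`). -/
noncomputable def cfNum (b₀ : ℝ) (a b : ℕ → ℝ) : ℕ → ℝ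
  | 0 => b₀
  | 1 => b 1 * b₀ + a 1
  | n + 2 => b (n + 2) * cfNum b₀ a b (n + 1) + a (n + 2) * cfNum b₀ a b n

/-- Denominators of the convergents of a generalized continued fraction. -/
noncomputable def cfDen (a b : ℕ → ℝ) : ℕ → ℝ
  | 0 => 1
  | 1 => b 1
  | n + 2 => b (n + 2) * cfDen a b (n + 1) + a (n + 2) * cfDen a b n

/-- `IsCFLimit b₀ a b L` means: the convergents of the generalized continued fraction
`b₀ + a 1 / (b 1 + a 2 / (b 2 + ⋯))` tend to `L`. -/
def IsCFLimit (b₀ : ℝ) (a b : ℕ → ℝ) (L : ℝ) : Prop :=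
  Filter.Tendsto (fun n => cfNum b₀ a b n / cfDen a b n) Filter.atTop (nhds L)

noncomputable def myP (r t : ℝ) : ℕ → ℝ := cfNum 0 (fun n => (n : ℝ) ^ 2 * r ^ 2) (fun _ => t)
noncomputable def myQ (r t : ℝ) : ℕ → ℝ := cfDen (fun n => (n : ℝ) ^ 2 * r ^ 2) (fun _ => t)

lemma myP_zero (r t : ℝ) : myP r t 0 = 0 := rfl
lemma myP_one (r t : ℝ) : myP r t 1 = r^2 := by
  show t * 0 + ((1:ℕ):ℝ)^2 * r^2 = r^2; norm_num
lemma myQ_zero (r t : ℝ) : myQ r t 0 = 1 := rfl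
lemma myQ_one (r t : ℝ) : myQ r t 1 = t := rfl
lemma myP_rec (r t : ℝ) (n : ℕ) :
    myP r t (n+2) = t * myP r t (n+1) + ((n:ℝ)+2)^2 * r^2 * myP r t n := by
  show t * myP r t (n+1) + ((n+2:ℕ):ℝ)^2 * r^2 * myP r t n = _
  push_cast; ring
lemma myQ_rec (r t : ℝ) (n : ℕ) :
    myQ r t (n+2) = t * myQ r t (n+1) + ((n:ℝ)+2)^2 * r^2 * myQ r t n := by
  show t * myQ r t (n+1) + ((n+2:ℕ):ℝ)^2 * r^2 * myQ r t n = _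
  push_cast; ring

noncomputable def myA (r t : ℝ) (n : ℕ) : ℝ :=
  (2*r^2 * myQ r t n - (t+3*r) * myP r t n) * myQ r (t+2*r) n
  - ((t-r) * myQ r t n + 2 * myP r t n) * myP r (t+2*r) n
noncomputable def myB (r t : ℝ) (n : ℕ) : ℝ :=
  (2*r^2 * myQ r t (n+1) - (t+3*r) * myP r t (n+1)) * myQ r (t+2*r) n
  - ((t-r) * myQ r t (n+1) + 2 * myP r t (n+1)) * myP r (t+2*r) n
noncomputable def myC (r t : ℝ) (n : ℕ) : ℝ :=
  (2*r^2 * myQ r t n - (t+3*r) * myP r t n) * myQ r (t+2*r) (n+1)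
  - ((t-r) * myQ r t n + 2 * myP r t n) * myP r (t+2*r) (n+1)

lemma cf_key (r t : ℝ) : ∀ n : ℕ,
    myA r t n = (-1)^n * 2 * ((Nat.factorial (n+1) : ℝ))^2 * r^(2*n+2)
  ∧ myA r t (n+1) = (-1)^(n+1) * 2 * ((Nat.factorial (n+2) : ℝ))^2 * r^(2*n+4)
  ∧ myB r t n = (-1)^n * ((Nat.factorial (n+1) : ℝ))^2 * r^(2*n+2) * (t - (2*(n:ℝ)+3)*r)
  ∧ myC r t n = (-1)^n * ((Nat.factorial (n+1) : ℝ))^2 * r^(2*n+2) * (t + (2*(n:ℝ)+5)*r) := by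
  intro n
  induction n with
  | zero =>
    refine ⟨?_, ?_, ?_, ?_⟩ <;>
      simp [myA, myB, myC, myP_zero, myP_one, myQ_zero, myQ_one, Nat.factorial] <;> ring
  | succ n ih =>
    obtain ⟨h0, h1, hb, hc⟩ := ih
    have hB : myB r t (n+1) = t * myA r t (n+1) + ((n:ℝ)+2)^2*r^2 * myC r t n := by
      simp only [myB, myA, myC, myP_rec, myQ_rec]; ring
    have hC : myC r t (n+1) = (t+2*r) * myA r t (n+1) + ((n:ℝ)+2)^2*r^2 * myB r t n := by
      simp only [myC, myA, myB]
      rw [show n+1+1 = n+2 from rfl, myP_rec r (t+2*r), myQ_rec r (t+2*r)]; ring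
    have hA : myA r t (n+2) = t*(t+2*r)*myA r t (n+1) + t*((n:ℝ)+2)^2*r^2*myB r t n
        + ((n:ℝ)+2)^2*r^2*(t+2*r)*myC r t n + (((n:ℝ)+2)^2*r^2)^2*myA r t n := by
      simp only [myA, myB, myC, myP_rec, myQ_rec]; ring
    have hf2 : ((Nat.factorial (n+2) : ℝ)) = ((n:ℝ)+2) * (Nat.factorial (n+1) : ℝ) := by
      rw [Nat.factorial_succ]; push_cast; ring
    have hf3 : ((Nat.factorial (n+3) : ℝ)) = ((n:ℝ)+3) * ((n:ℝ)+2) * (Nat.factorial (n+1) : ℝ) := by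
      rw [Nat.factorial_succ, Nat.factorial_succ]; push_cast; ring
    refine ⟨h1, ?_, ?_, ?_⟩
    · rw [show n+1+1 = n+2 from rfl, hA, h0, h1, hb, hc, hf3, hf2]
      push_cast; ring
    · rw [hB, h1, hc, hf2]; push_cast; ring
    · rw [hC, h1, hb, hf2]; push_cast; ring

lemma myQ_pos (r t : ℝ) (ht : 0 < t) : ∀ n, 0 < myQ r t n := by
  have h : ∀ n, 0 < myQ r t n ∧ 0 < myQ r t (n+1) := by
    intro n
    induction n with
    | zero => exact ⟨by rw [myQ_zero]; norm_num, by rw [myQ_one]; exact ht⟩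
    | succ n ih =>
      refine ⟨ih.2, ?_⟩
      rw [show n+1+1 = n+2 from rfl, myQ_rec]
      have h2 : (0:ℝ) ≤ ((n:ℝ)+2)^2 * r^2 * myQ r t n :=
        mul_nonneg (by positivity) ih.1.le
      nlinarith [mul_pos ht ih.2]
  exact fun n => (h n).1

lemma myP_nonneg (r t : ℝ) (ht : 0 ≤ t) : ∀ n, 0 ≤ myP r t n := by
  have h : ∀ n, 0 ≤ myP r t n ∧ 0 ≤ myP r t (n+1) := by
    intro n
    induction n with
    | zero => exact ⟨by rw [myP_zero], by rw [myP_one]; positivity⟩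
    | succ n ih =>
      refine ⟨ih.2, ?_⟩
      rw [show n+1+1 = n+2 from rfl, myP_rec]
      have h2 : (0:ℝ) ≤ ((n:ℝ)+2)^2 * r^2 * myP r t n :=
        mul_nonneg (by positivity) ih.1
      nlinarith [mul_nonneg ht ih.2]
  exact fun n => (h n).1

open Filter in
lemma cf_rel (r : ℝ) (hr : 0 < r) (t : ℝ) (ht : 0 < t) (Ka Kb : ℝ)
    (hx : Tendsto (fun n => myP r t n / myQ r t n) atTop (nhds Ka))
    (hy : Tendsto (fun n => myP r (t+2*r) n / myQ r (t+2*r) n) atTop (nhds Kb)) :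
    (t - r + 2*Ka) * Kb = 2*r^2 - (t+3*r)*Ka ∧ 0 ≤ Ka ∧ 0 ≤ Kb := by
  have hT : 0 < t + 2*r := by linarith
  have hQ := myQ_pos r t ht
  have hQ' := myQ_pos r (t+2*r) hT
  have hP := myP_nonneg r t ht.le
  have hP' := myP_nonneg r (t+2*r) hT.le
  have hKa : 0 ≤ Ka := ge_of_tendsto' hx fun n => div_nonneg (hP n) (hQ n).le
  have hKb : 0 ≤ Kb := ge_of_tendsto' hy fun n => div_nonneg (hP' n) (hQ' n).le
  have hE : Tendsto
      (fun n => 2*r^2 - (t+3*r)*(myP r t n / myQ r t n)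
        - (t - r + 2*(myP r t n / myQ r t n))*(myP r (t+2*r) n / myQ r (t+2*r) n))
      atTop (nhds (2*r^2 - (t+3*r)*Ka - (t - r + 2*Ka)*Kb)) :=
    (tendsto_const_nhds.sub (hx.const_mul (t+3*r))).sub
      ((tendsto_const_nhds.add (hx.const_mul 2)).mul hy)
  have heq : ∀ n, 2*r^2 - (t+3*r)*(myP r t n / myQ r t n)
        - (t - r + 2*(myP r t n / myQ r t n))*(myP r (t+2*r) n / myQ r (t+2*r) n)
      = myA r t n / (myQ r t n * myQ r (t+2*r) n) := by
    intro n
    rw [eq_div_iff (ne_of_gt (mul_pos (hQ n) (hQ' n))), myA]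
    field_simp [myA, ne_of_gt (hQ n), ne_of_gt (hQ' n)]
  have hfact : ∀ m : ℕ, (0:ℝ) < (Nat.factorial (m+1) : ℝ) := by
    intro m; exact_mod_cast Nat.factorial_pos (m+1)
  have h2m : Tendsto (fun m : ℕ => 2*m) atTop atTop := by
    refine tendsto_atTop_mono ?_ tendsto_id
    intro n; simp only [id]; omega
  have h2m1 : Tendsto (fun m : ℕ => 2*m+1) atTop atTop := by
    refine tendsto_atTop_mono ?_ tendsto_id
    intro n; simp only [id]; omega
  have hge : 0 ≤ 2*r^2 - (t+3*r)*Ka - (t - r + 2*Ka)*Kb := by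
    refine ge_of_tendsto (hE.comp h2m) (Eventually.of_forall fun m => ?_)
    show (0:ℝ) ≤ _
    rw [Function.comp_apply, heq (2*m), (cf_key r t (2*m)).1]
    have h1 : ((-1:ℝ))^(2*m) = 1 := by rw [pow_mul]; norm_num
    rw [h1]
    exact div_nonneg (by positivity) (mul_pos (hQ _) (hQ' _)).le
  have hle : 2*r^2 - (t+3*r)*Ka - (t - r + 2*Ka)*Kb ≤ 0 := by
    refine le_of_tendsto (hE.comp h2m1) (Eventually.of_forall fun m => ?_)
    show _ ≤ (0:ℝ)
    rw [Function.comp_apply, heq (2*m+1), (cf_key r t (2*m+1)).1]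
    have h1 : ((-1:ℝ))^(2*m+1) = -1 := by rw [pow_succ, pow_mul]; norm_num
    rw [h1]
    apply div_nonpos_of_nonpos_of_nonneg
    · have : (0:ℝ) ≤ 2 * (Nat.factorial (2*m+1+1) : ℝ)^2 * r^(2*(2*m+1)+2) := by positivity
      nlinarith
    · exact (mul_pos (hQ _) (hQ' _)).le
  refine ⟨by linarith, hKa, hKb⟩


theorem cf_functional_equation (r : ℝ) (hr : 0 < r) (ψ : ℝ → ℝ) (K : ℝ → ℝ)
    (hK : ∀ s : ℝ, -ψ r < s →
      IsCFLimit 0 (fun n => (n : ℝ) ^ 2 * r ^ 2) (fun _ => s + ψ r) (K s)) :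
    (∀ s : ℝ, -ψ r < s →
        1 / (2 * (s + ψ r) + 2 * K s) +
          1 / (2 * (s + 2 * r + ψ r) + 2 * K (s + 2 * r)) = 1 / ((s + ψ r) + r)) ∧
    Tendsto (fun s : ℝ => 1 / (2 * (s + ψ r) + 2 * K s)) atTop (nhds 0) ∧
    ∀ f : ℝ → ℝ, (∀ s : ℝ, -ψ r < s → f s + f (s + 2 * r) = 1 / ((s + ψ r) + r)) →
      Tendsto f atTop (nhds 0) →
      ∀ s : ℝ, -ψ r < s → f s = 1 / (2 * (s + ψ r) + 2 * K s) := by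
  have hrel : ∀ s : ℝ, -ψ r < s →
      ((s + ψ r) - r + 2*K s) * K (s+2*r) = 2*r^2 - ((s + ψ r)+3*r)*K s
        ∧ 0 ≤ K s ∧ 0 ≤ K (s+2*r) := by
    intro s hs
    have ht : 0 < s + ψ r := by linarith
    have hx : Tendsto (fun n => myP r (s+ψ r) n / myQ r (s+ψ r) n) atTop (nhds (K s)) :=
      hK s hs
    have hy : Tendsto (fun n => myP r ((s+ψ r)+2*r) n / myQ r ((s+ψ r)+2*r) n) atTop
        (nhds (K (s+2*r))) := by
      rw [show (s+ψ r)+2*r = (s+2*r)+ψ r by ring]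
      exact hK (s+2*r) (by linarith)
    exact cf_rel r hr (s+ψ r) ht (K s) (K (s+2*r)) hx hy
  have hpart1 : ∀ s : ℝ, -ψ r < s →
      1 / (2 * (s + ψ r) + 2 * K s) +
        1 / (2 * (s + 2 * r + ψ r) + 2 * K (s + 2 * r)) = 1 / ((s + ψ r) + r) := by
    intro s hs
    obtain ⟨h, hKa, hKb⟩ := hrel s hs
    have ht : 0 < s + ψ r := by linarith
    have d1 : (2 * (s + ψ r) + 2 * K s) ≠ 0 := ne_of_gt (by linarith)
    have d2 : (2 * (s + 2 * r + ψ r) + 2 * K (s + 2 * r)) ≠ 0 := ne_of_gt (by linarith)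
    have d3 : ((s + ψ r) + r) ≠ 0 := ne_of_gt (by linarith)
    rw [div_add_div _ _ d1 d2, div_eq_div_iff (mul_ne_zero d1 d2) d3]
    linear_combination (-2) * h
  have hpart2 : Tendsto (fun s : ℝ => 1 / (2 * (s + ψ r) + 2 * K s)) atTop (nhds 0) := by
    have hup : Tendsto (fun s : ℝ => 1 / (2 * (s + ψ r))) atTop (nhds 0) := by
      have h1 : Tendsto (fun s : ℝ => 2 * (s + ψ r)) atTop atTop :=
        (tendsto_atTop_add_const_right atTop (ψ r) tendsto_id).const_mul_atTop two_pos
      have h2 := h1.inv_tendsto_atTop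
      have h3 : (fun s : ℝ => 2 * (s + ψ r))⁻¹ = fun s : ℝ => 1 / (2 * (s + ψ r)) := by
        funext x; simp [one_div]
      rwa [h3] at h2
    refine tendsto_of_tendsto_of_tendsto_of_le_of_le' tendsto_const_nhds hup ?_ ?_
    · filter_upwards [eventually_gt_atTop (-ψ r)] with s hs
      have ht : 0 < s + ψ r := by linarith
      have := (hrel s hs).2.1
      positivity
    · filter_upwards [eventually_gt_atTop (-ψ r)] with s hs
      have ht : 0 < s + ψ r := by linarith
      have hKa := (hrel s hs).2.1
      apply one_div_le_one_div_of_le (by linarith) (by linarith)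
  refine ⟨hpart1, hpart2, ?_⟩
  intro f hfe hf0 s hs
  set g : ℝ → ℝ := fun s => 1 / (2 * (s + ψ r) + 2 * K s) with hg
  have hclaim : ∀ u : ℝ, -ψ r < u → (f u - g u) + (f (u+2*r) - g (u+2*r)) = 0 := by
    intro u hu
    have h1 := hfe u hu
    have h2 := hpart1 u hu
    simp only [hg]
    linarith
  have hiter : ∀ n : ℕ, f s - g s = (-1)^n * (f (s+2*r*n) - g (s+2*r*n)) := by
    intro n
    induction n with
    | zero => simp
    | succ n ih =>
      have hu : -ψ r < s + 2*r*n := by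
        have : (0:ℝ) ≤ 2*r*n := by positivity
        linarith
      have h2 := hclaim (s+2*r*n) hu
      have h3 : s + 2*r*n + 2*r = s + 2*r*((n:ℝ)+1) := by ring
      rw [ih]
      rw [h3] at h2
      push_cast
      have h4 : f (s + 2*r*((n:ℝ)+1)) - g (s + 2*r*((n:ℝ)+1))
          = -(f (s+2*r*n) - g (s+2*r*n)) := by linarith
      rw [h4]; ring
  have hseq : Tendsto (fun n : ℕ => s + 2*r*(n:ℝ)) atTop atTop := by
    apply tendsto_atTop_add_const_left
    exact (tendsto_natCast_atTop_atTop).const_mul_atTop (by linarith)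
  have hd : Tendsto (fun u : ℝ => f u - g u) atTop (nhds 0) := by
    simpa using hf0.sub hpart2
  have habs : Tendsto (fun n : ℕ => |f (s+2*r*(n:ℝ)) - g (s+2*r*(n:ℝ))|) atTop (nhds 0) := by
    simpa using ((hd.comp hseq).abs)
  have hconst : Tendsto (fun _ : ℕ => |f s - g s|) atTop (nhds 0) := by
    refine habs.congr fun n => ?_
    rw [show |f (s+2*r*(n:ℝ)) - g (s+2*r*(n:ℝ))| = |(-1:ℝ)^n * (f (s+2*r*(n:ℝ)) - g (s+2*r*(n:ℝ)))| by
      rw [abs_mul, abs_pow, abs_neg, abs_one, one_pow, one_mul], ← hiter n]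
  have : |f s - g s| = 0 := tendsto_nhds_unique tendsto_const_nhds hconst
  have := abs_eq_zero.mp this
  simp only [hg] at this ⊢
  linarith
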